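/- Let d ≥ 1, let φ : ℝ^d → ℝ be a C¹ function with compact support, let ψ : ℝ^d → ℝ be a C² function, let η : ℝ → (0,∞) be a C¹ function with η′ > 0 everywhere, and let 0 < γ < 1. Then ∫_{ℝ^d} φ(x)² [ Δψ(x)/η(−ψ(x)) + (1−γ) ( η′(−ψ(x)) / η(−ψ(x))² ) |∇ψ(x)|² ] dx ≤ (1/γ) ∫_{ℝ^d} |∇φ(x)|² / η′(−ψ(x)) dx, where Δ denotes the Euclidean Laplacian and ∇ the Euclidean gradient. -/

import Mathlib

open MeasureTheory Set RealInnerProductSpace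

private lemma young_aux (γ A B q F g : ℝ) (hγ : 0 < γ) (hA : 0 < A) (hB : 0 < B) :
    2 * q / A * (F * g) ≤ γ * (q ^ 2 * B / A ^ 2 * g ^ 2) + (1 / γ) * (F ^ 2 / B) := by
  have h : γ * (q ^ 2 * B / A ^ 2 * g ^ 2) + (1 / γ) * (F ^ 2 / B) - 2 * q / A * (F * g)
      = (γ * B * q * g - A * F) ^ 2 / (γ * A ^ 2 * B) := by
    field_simp
    ring
  nlinarith [div_nonneg (sq_nonneg (γ * B * q * g - A * F)) (by positivity : (0:ℝ) ≤ γ * A ^ 2 * B)]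

private theorem pi_integral_partial_eq_zero {n : ℕ} (g : (Fin (n+1) → ℝ) → ℝ)
    (hg : ContDiff ℝ 1 g) (hgc : HasCompactSupport g) (i : Fin (n+1)) :
    ∫ x, fderiv ℝ g x (Pi.single i 1) = 0 := by
  obtain ⟨R, hR0, hR⟩ := hgc.isBounded.subset_ball_lt 0 0
  set a : Fin (n+1) → ℝ := fun _ => -R
  set b : Fin (n+1) → ℝ := fun _ => R
  have hle : a ≤ b := fun j => by
    simp only [a, b]; linarith
  have hgd : Differentiable ℝ g := hg.differentiable one_ne_zero
  have key := integral_divergence_of_hasFDerivAt_off_countable' a b hle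
    (fun j => if j = i then g else 0)
    (fun j x => if j = i then fderiv ℝ g x else 0) ∅ countable_empty
    (fun j => by
      by_cases h : j = i
      · simpa [h] using hg.continuous.continuousOn
      · simpa [h] using (continuous_zero : Continuous (0 : (Fin (n+1) → ℝ) → ℝ)).continuousOn)
    (fun x _ j => by
      by_cases h : j = i <;> simp only [h, if_true, if_false]
      · exact (hgd x).hasFDerivAt
      · exact hasFDerivAt_const 0 x)
    (by
      have : (fun x => ∑ j, (if j = i then fderiv ℝ g x else 0) (Pi.single j 1))
          = fun x => fderiv ℝ g x (Pi.single i 1) := by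
        funext x
        rw [Finset.sum_eq_single i] <;> simp +contextual [eq_comm]
      rw [this]
      exact ((hg.continuous_fderiv one_ne_zero).clm_apply continuous_const).continuousOn.integrableOn_compact
        isCompact_Icc)
  have hzero : ∀ (y : Fin (n+1) → ℝ), R ≤ |y i| → g y = 0 := by
    intro y hy
    apply image_eq_zero_of_notMem_tsupport
    intro hmem
    have := hR hmem
    rw [Metric.mem_ball, dist_zero_right] at this
    have h2 : |y i| ≤ ‖y‖ := by simpa using norm_le_pi_norm y i
    linarith
  rw [Finset.sum_eq_single i] at key; rotate_left
  · intro j _ hj; simp [hj]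
  · simp
  have hsum : ∀ x : Fin (n+1) → ℝ, (∑ j : Fin (n+1),
      (if j = i then fderiv ℝ g x else 0) (Pi.single j 1)) = fderiv ℝ g x (Pi.single i 1) := by
    intro x
    rw [Finset.sum_eq_single i] <;> simp +contextual [eq_comm]
  simp only [hsum, if_true, eq_self_iff_true] at key
  have hfront : ∀ (x : Fin n → ℝ), g (i.insertNth (b i) x) = 0 := fun x =>
    hzero _ (by simp [b, abs_of_nonneg hR0.le, le_refl])
  have hback : ∀ (x : Fin n → ℝ), g (i.insertNth (a i) x) = 0 := fun x =>
    hzero _ (by simp [a, abs_of_nonneg hR0.le, le_refl])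
  simp only [hfront, hback, integral_zero, sub_zero] at key
  rw [← key]
  symm
  apply setIntegral_eq_integral_of_forall_compl_eq_zero
  intro x hx
  have hxs : x ∉ tsupport g := by
    intro hmem
    apply hx
    have := hR hmem
    rw [Metric.mem_ball, dist_zero_right] at this
    refine Set.mem_Icc.2 ⟨fun j => ?_, fun j => ?_⟩ <;>
      · have h2 : |x j| ≤ ‖x‖ := by simpa using norm_le_pi_norm x j
        have := abs_le.1 (h2.trans this.le)
        simp [a, b]; linarith [this.1, this.2]
  have : fderiv ℝ g x = 0 := fderiv_of_notMem_tsupport _ hxs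
  simp [this]

private theorem euclid_integral_partial_eq_zero {d : ℕ} (g : EuclideanSpace ℝ (Fin d) → ℝ)
    (hg : ContDiff ℝ 1 g) (hgc : HasCompactSupport g) (i : Fin d) :
    ∫ x, fderiv ℝ g x (EuclideanSpace.single i 1) = 0 := by
  cases d with
  | zero => exact i.elim0
  | succ n =>
    set e : EuclideanSpace ℝ (Fin (n+1)) ≃L[ℝ] (Fin (n+1) → ℝ) :=
      EuclideanSpace.equiv (Fin (n+1)) ℝ
    have hmp := (EuclideanSpace.volume_preserving_symm_measurableEquiv_toLp (Fin (n+1))).symm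
    have h1 : ∫ x, fderiv ℝ g x (EuclideanSpace.single i 1)
        = ∫ y : Fin (n+1) → ℝ, fderiv ℝ g (e.symm y) (EuclideanSpace.single i 1) := by
      rw [← hmp.integral_comp (MeasurableEquiv.toLp 2 (Fin (n+1) → ℝ)).measurableEmbedding]
      rfl
    rw [h1]
    have h2 : ∀ y, fderiv ℝ (g ∘ e.symm) y (Pi.single i 1)
        = fderiv ℝ g (e.symm y) (EuclideanSpace.single i 1) := by
      intro y
      rw [e.symm.comp_right_fderiv]
      rfl
    simp only [← h2]
    exact pi_integral_partial_eq_zero (g ∘ e.symm)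
      (hg.comp e.symm.contDiff) (hgc.comp_homeomorph e.symm.toHomeomorph) i

open MeasureTheory

/-- The Euclidean Laplacian of `f : ℝ^d → ℝ`, as the sum of the pure second partial
derivatives `∂²f/∂x_i²`. -/
noncomputable def euclideanLaplacian {d : ℕ} (f : EuclideanSpace ℝ (Fin d) → ℝ)
    (x : EuclideanSpace ℝ (Fin d)) : ℝ :=
  ∑ i : Fin d, iteratedFDeriv ℝ 2 f x (fun _ => EuclideanSpace.single i 1)

set_option maxHeartbeats 1600000 in
/-- Proposition 2.2, inequality (2.3), Euclidean case: for `φ` a `C¹` function with compact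
support, `ψ` a `C²` function, `η : ℝ → (0,∞)` a `C¹` function with `η′ > 0`, and `0 < γ < 1`,
`∫ φ² [Δψ/η(−ψ) + (1−γ)(η′(−ψ)/η(−ψ)²)|∇ψ|²] ≤ (1/γ) ∫ |∇φ|²/η′(−ψ)`. -/
theorem stmt_1 {d : ℕ} (hd : 1 ≤ d)
    (φ ψ : EuclideanSpace ℝ (Fin d) → ℝ)
    (hφ : ContDiff ℝ 1 φ) (hφc : HasCompactSupport φ)
    (hψ : ContDiff ℝ 2 ψ)
    (η : ℝ → ℝ) (hη : ContDiff ℝ 1 η) (hη0 : ∀ t, 0 < η t)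
    (hη' : ∀ t, 0 < deriv η t)
    (γ : ℝ) (hγ0 : 0 < γ) (hγ1 : γ < 1) :
    ∫ x, φ x ^ 2 * (euclideanLaplacian ψ x / η (-ψ x)
        + (1 - γ) * (deriv η (-ψ x) / (η (-ψ x)) ^ 2) * ‖gradient ψ x‖ ^ 2)
      ≤ (1 / γ) * ∫ x, ‖gradient φ x‖ ^ 2 / deriv η (-ψ x) := by
  set e : Fin d → EuclideanSpace ℝ (Fin d) := fun i => EuclideanSpace.single i 1 with he_def
  set c : EuclideanSpace ℝ (Fin d) → ℝ := fun y => φ y * φ y * (η (-ψ y))⁻¹ with hc_def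
  set g : Fin d → EuclideanSpace ℝ (Fin d) → ℝ := fun i x => c x * fderiv ℝ ψ x (e i) with hg_def
  have ha_ne : ∀ x : EuclideanSpace ℝ (Fin d), η (-ψ x) ≠ 0 := fun x => (hη0 _).ne'
  have hψ1 : ContDiff ℝ 1 ψ := hψ.of_le one_le_two
  have hψd : Differentiable ℝ ψ := hψ1.differentiable one_ne_zero
  have hφd : Differentiable ℝ φ := hφ.differentiable one_ne_zero
  have hηd : Differentiable ℝ η := hη.differentiable one_ne_zero
  have hψ' : ContDiff ℝ ((1 : ℕ) + 1) ψ := hψ.of_le (by norm_num)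
  have hψ2 : ContDiff ℝ 1 (fderiv ℝ ψ) := (contDiff_succ_iff_fderiv.mp hψ').2.2
  have hψ2d : Differentiable ℝ (fderiv ℝ ψ) := hψ2.differentiable one_ne_zero
  -- inner product representations
  have hfdψ : ∀ (x : EuclideanSpace ℝ (Fin d)) v, fderiv ℝ ψ x v = ⟪gradient ψ x, v⟫ := fun x v =>
    (InnerProductSpace.toDual_symm_apply (𝕜 := ℝ)).symm
  have hfdφ : ∀ (x : EuclideanSpace ℝ (Fin d)) v, fderiv ℝ φ x v = ⟪gradient φ x, v⟫ := fun x v =>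
    (InnerProductSpace.toDual_symm_apply (𝕜 := ℝ)).symm
  -- derivatives
  have hax : ∀ x : EuclideanSpace ℝ (Fin d), HasFDerivAt (fun y : EuclideanSpace ℝ (Fin d) => η (-ψ y))
      ((deriv η (-ψ x)) • (-(fderiv ℝ ψ x))) x := fun x =>
    HasDerivAt.comp_hasFDerivAt x ((hηd _).hasDerivAt) ((hψd x).hasFDerivAt.neg)
  have hinvx : ∀ x : EuclideanSpace ℝ (Fin d), HasFDerivAt (fun y : EuclideanSpace ℝ (Fin d) => (η (-ψ y))⁻¹)
      ((-((η (-ψ x)) ^ 2)⁻¹) • ((deriv η (-ψ x)) • (-(fderiv ℝ ψ x)))) x := fun x =>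
    HasDerivAt.comp_hasFDerivAt x (hasDerivAt_inv (ha_ne x)) (hax x)
  set C : EuclideanSpace ℝ (Fin d) → (EuclideanSpace ℝ (Fin d) →L[ℝ] ℝ) := fun x =>
    (φ x * φ x) • ((-((η (-ψ x)) ^ 2)⁻¹) • ((deriv η (-ψ x)) • (-(fderiv ℝ ψ x))))
      + (η (-ψ x))⁻¹ • (φ x • fderiv ℝ φ x + φ x • fderiv ℝ φ x) with hC_def
  have hcx : ∀ x : EuclideanSpace ℝ (Fin d), HasFDerivAt c (C x) x := fun x =>
    ((hφd x).hasFDerivAt.mul (hφd x).hasFDerivAt).mul (hinvx x)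
  have hψ2x : ∀ (x : EuclideanSpace ℝ (Fin d)) (i : Fin d), HasFDerivAt (fun y => fderiv ℝ ψ y (e i))
      ((fderiv ℝ ψ x).comp (0 : EuclideanSpace ℝ (Fin d) →L[ℝ] EuclideanSpace ℝ (Fin d)) + (fderiv ℝ (fderiv ℝ ψ) x).flip (e i)) x :=
    fun x i => (hψ2d x).hasFDerivAt.clm_apply (hasFDerivAt_const (e i) x)
  have hgx : ∀ (i : Fin d) (x : EuclideanSpace ℝ (Fin d)), HasFDerivAt (g i)
      (c x • ((fderiv ℝ ψ x).comp (0 : EuclideanSpace ℝ (Fin d) →L[ℝ] EuclideanSpace ℝ (Fin d)) + (fderiv ℝ (fderiv ℝ ψ) x).flip (e i))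
        + (fderiv ℝ ψ x (e i)) • C x) x := fun i x => (hcx x).mul (hψ2x x i)
  -- coordinate expansion of the gradient
  have hGsum : ∀ x : EuclideanSpace ℝ (Fin d), (∑ i, fderiv ℝ ψ x (e i) • e i) = gradient ψ x := by
    intro x
    have h1 : ∀ i, fderiv ℝ ψ x (e i) = gradient ψ x i := by
      intro i
      rw [hfdψ, he_def]
      simpa using EuclideanSpace.inner_single_right (𝕜 := ℝ) i 1 (gradient ψ x)
    simp_rw [h1]
    simpa [EuclideanSpace.basisFun_apply] using
      (EuclideanSpace.basisFun (Fin d) ℝ).sum_repr (gradient ψ x)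
  -- divergence identity
  have hdiv : ∀ x : EuclideanSpace ℝ (Fin d), (∑ i, fderiv ℝ (g i) x (e i))
      = c x * euclideanLaplacian ψ x + C x (gradient ψ x) := by
    intro x
    have h1 : ∀ i : Fin d, fderiv ℝ (g i) x (e i)
        = c x * (fderiv ℝ (fderiv ℝ ψ) x (e i) (e i)) + fderiv ℝ ψ x (e i) * C x (e i) := by
      intro i
      rw [(hgx i x).fderiv]
      simp
    rw [Finset.sum_congr rfl (fun i _ => h1 i), Finset.sum_add_distrib, ← Finset.mul_sum]
    congr 1
    · congr 1
      unfold euclideanLaplacian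
      refine Finset.sum_congr rfl (fun i _ => ?_)
      rw [iteratedFDeriv_two_apply]
    · rw [← hGsum x, map_sum]
      exact Finset.sum_congr rfl fun i _ => by rw [ContinuousLinearMap.map_smul, smul_eq_mul]
  have hCG : ∀ x : EuclideanSpace ℝ (Fin d), C x (gradient ψ x)
      = 2 * φ x / η (-ψ x) * ⟪gradient φ x, gradient ψ x⟫
        + φ x ^ 2 * deriv η (-ψ x) / (η (-ψ x)) ^ 2 * ‖gradient ψ x‖ ^ 2 := by
    intro x
    have h1 := hfdψ x (gradient ψ x)
    have h2 := hfdφ x (gradient ψ x)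
    rw [real_inner_self_eq_norm_sq] at h1
    simp only [hC_def, ContinuousLinearMap.add_apply, ContinuousLinearMap.coe_smul',
      Pi.smul_apply, ContinuousLinearMap.neg_apply, smul_eq_mul, h1, h2]
    field_simp
    ring
  -- supports and continuity
  have hcψ2 : Continuous (fderiv ℝ ψ) := hψ.continuous_fderiv two_ne_zero
  have hcG : Continuous (gradient ψ) := by
    show Continuous fun x => (InnerProductSpace.toDual ℝ (EuclideanSpace ℝ (Fin d))).symm (fderiv ℝ ψ x)
    exact (InnerProductSpace.toDual ℝ (EuclideanSpace ℝ (Fin d))).symm.continuous.comp hcψ2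
  have hcGφ : Continuous (gradient φ) := by
    show Continuous fun x => (InnerProductSpace.toDual ℝ (EuclideanSpace ℝ (Fin d))).symm (fderiv ℝ φ x)
    exact (InnerProductSpace.toDual ℝ (EuclideanSpace ℝ (Fin d))).symm.continuous.comp (hφ.continuous_fderiv one_ne_zero)
  have hca : Continuous (fun x : EuclideanSpace ℝ (Fin d) => η (-ψ x)) := hη.continuous.comp hψ1.continuous.neg
  have hcb : Continuous (fun x : EuclideanSpace ℝ (Fin d) => deriv η (-ψ x)) :=
    (hη.continuous_deriv le_rfl).comp hψ1.continuous.neg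
  have hcC : ContDiff ℝ 1 c :=
    (hφ.mul hφ).mul ((hη.comp hψ1.neg).inv ha_ne)
  have hgiC : ∀ i, ContDiff ℝ 1 (g i) := fun i => hcC.mul (hψ2.clm_apply contDiff_const)
  have hgisupp : ∀ i, HasCompactSupport (g i) := by
    intro i
    apply hφc.mono'
    intro x hx
    apply subset_closure
    simp only [Function.mem_support] at hx ⊢
    intro h0
    apply hx
    simp [hg_def, hc_def, h0]
  have hgradφsupp : HasCompactSupport (gradient φ) := by
    have := (hφc.fderiv ℝ).comp_left
      (g := fun L : EuclideanSpace ℝ (Fin d) →L[ℝ] ℝ => (InnerProductSpace.toDual ℝ (EuclideanSpace ℝ (Fin d))).symm L) (map_zero _)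
    exact this
  -- integrable pieces
  have intDi : ∀ i : Fin d, Integrable (fun x => fderiv ℝ (g i) x (e i)) := by
    intro i
    exact (((hgiC i).continuous_fderiv one_ne_zero).clm_apply continuous_const).integrable_of_hasCompactSupport
      ((hgisupp i).fderiv_apply ℝ (e i))
  set D : EuclideanSpace ℝ (Fin d) → ℝ := fun x => ∑ i, fderiv ℝ (g i) x (e i) with hD_def
  have intD : Integrable D := integrable_finset_sum _ (fun i _ => intDi i)
  have hintD0 : ∫ x, D x = 0 := by
    rw [hD_def, integral_finset_sum _ (fun i _ => intDi i)]
    exact Finset.sum_eq_zero fun i _ => euclid_integral_partial_eq_zero (g i) (hgiC i) (hgisupp i) i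
  set Q : EuclideanSpace ℝ (Fin d) → ℝ := fun x => -(2 * φ x / η (-ψ x) * ⟪gradient φ x, gradient ψ x⟫)
      - γ * (φ x ^ 2 * deriv η (-ψ x) / (η (-ψ x)) ^ 2 * ‖gradient ψ x‖ ^ 2) with hQ_def
  set R : EuclideanSpace ℝ (Fin d) → ℝ := fun x => (1 / γ) * (‖gradient φ x‖ ^ 2 / deriv η (-ψ x)) with hR_def
  have hcQ : Continuous Q := by
    apply Continuous.sub
    · exact (((continuous_const.mul hφ.continuous).div hca ha_ne).mul
        (hcGφ.inner hcG)).neg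
    · exact continuous_const.mul
        ((((hφ.continuous.pow 2).mul hcb).div (hca.pow 2) (fun x => pow_ne_zero 2 (ha_ne x))).mul
          ((hcG.norm).pow 2))
  have hQsupp : HasCompactSupport Q := by
    apply hφc.mono'
    intro x hx
    apply subset_closure
    simp only [Function.mem_support] at hx ⊢
    intro h0
    apply hx
    simp [hQ_def, h0]
  have intQ : Integrable Q := hcQ.integrable_of_hasCompactSupport hQsupp
  have hcR : Continuous R := continuous_const.mul
    (((hcGφ.norm).pow 2).div hcb (fun x => (hη' _).ne'))
  have hRsupp : HasCompactSupport R := by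
    apply hgradφsupp.mono'
    intro x hx
    apply subset_closure
    simp only [Function.mem_support] at hx ⊢
    intro h0
    apply hx
    simp [hR_def, h0]
  have intR : Integrable R := hcR.integrable_of_hasCompactSupport hRsupp
  -- pointwise identity: integrand = D + Q
  have hP : ∀ x : EuclideanSpace ℝ (Fin d), φ x ^ 2 * (euclideanLaplacian ψ x / η (-ψ x)
      + (1 - γ) * (deriv η (-ψ x) / (η (-ψ x)) ^ 2) * ‖gradient ψ x‖ ^ 2) = D x + Q x := by
    intro x
    have hDx : D x = (φ x * φ x * (η (-ψ x))⁻¹) * euclideanLaplacian ψ x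
        + (2 * φ x / η (-ψ x) * ⟪gradient φ x, gradient ψ x⟫
          + φ x ^ 2 * deriv η (-ψ x) / (η (-ψ x)) ^ 2 * ‖gradient ψ x‖ ^ 2) :=
      (hdiv x).trans (by rw [hCG x])
    have hQx : Q x = -(2 * φ x / η (-ψ x) * ⟪gradient φ x, gradient ψ x⟫)
        - γ * (φ x ^ 2 * deriv η (-ψ x) / (η (-ψ x)) ^ 2 * ‖gradient ψ x‖ ^ 2) := rfl
    rw [hDx, hQx]
    have hA := ha_ne x
    generalize φ x = p at *
    generalize euclideanLaplacian ψ x = L at *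
    generalize η (-ψ x) = A at *
    generalize (⟪gradient φ x, gradient ψ x⟫ : ℝ) = I
    generalize deriv η (-ψ x) = B at *
    generalize ‖gradient ψ x‖ = N at *
    field_simp
    ring
  -- pointwise Young inequality : Q ≤ R
  have hQR : ∀ x : EuclideanSpace ℝ (Fin d), Q x ≤ R x := by
    intro x
    have hA : 0 < η (-ψ x) := hη0 _
    have hB : 0 < deriv η (-ψ x) := hη' _
    have h1 : -(2 * φ x / η (-ψ x) * ⟪gradient φ x, gradient ψ x⟫)
        ≤ 2 * |φ x| / η (-ψ x) * (‖gradient φ x‖ * ‖gradient ψ x‖) := by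
      have hcs := abs_real_inner_le_norm (gradient φ x) (gradient ψ x)
      calc -(2 * φ x / η (-ψ x) * ⟪gradient φ x, gradient ψ x⟫)
          ≤ |2 * φ x / η (-ψ x) * ⟪gradient φ x, gradient ψ x⟫| := neg_le_abs _
        _ = 2 * |φ x| / η (-ψ x) * |⟪gradient φ x, gradient ψ x⟫| := by
            rw [abs_mul]
            congr 1
            rw [abs_div, abs_mul]
            simp [abs_of_pos hA, abs_of_nonneg (by norm_num : (0:ℝ) ≤ 2)]
        _ ≤ 2 * |φ x| / η (-ψ x) * (‖gradient φ x‖ * ‖gradient ψ x‖) := by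
            apply mul_le_mul_of_nonneg_left hcs
            positivity
    have h2 := young_aux γ (η (-ψ x)) (deriv η (-ψ x)) (|φ x|) (‖gradient φ x‖)
      (‖gradient ψ x‖) hγ0 hA hB
    rw [sq_abs] at h2
    have hQx : Q x = -(2 * φ x / η (-ψ x) * ⟪gradient φ x, gradient ψ x⟫)
        - γ * (φ x ^ 2 * deriv η (-ψ x) / (η (-ψ x)) ^ 2 * ‖gradient ψ x‖ ^ 2) := rfl
    have hRx : R x = (1 / γ) * (‖gradient φ x‖ ^ 2 / deriv η (-ψ x)) := rfl
    rw [hQx, hRx]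
    linarith [h1, h2]
  -- put everything together
  calc ∫ x, φ x ^ 2 * (euclideanLaplacian ψ x / η (-ψ x)
        + (1 - γ) * (deriv η (-ψ x) / (η (-ψ x)) ^ 2) * ‖gradient ψ x‖ ^ 2)
      = ∫ x, (D x + Q x) := by
        refine integral_congr_ae (Filter.Eventually.of_forall (fun x => hP x))
    _ = (∫ x, D x) + ∫ x, Q x := integral_add intD intQ
    _ = ∫ x, Q x := by rw [hintD0, zero_add]
    _ ≤ ∫ x, R x := integral_mono intQ intR hQR
    _ = (1 / γ) * ∫ x, ‖gradient φ x‖ ^ 2 / deriv η (-ψ x) := by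
        rw [hR_def]
        exact integral_const_mul _ _
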